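/- With S_0 a tuple of p distinct eigenvalues (d_{k_1 k_1},...,d_{k_p k_p}) and X, Y as in the eigenvector columns, F(S_0) := (Y^T X)^{-1}(Y^T A X) = diag(d_{k_1 k_1},...,d_{k_p k_p}). In particular S_0 is a fixed point of the map G(S) = (eigenvalues of F(S)). -/
import Mathlib


open Matrix

/-- At a tuple of distinct eigenvalues, `F(S₀) = (Yᵀ X)⁻¹ (Yᵀ A X)` is the
diagonal matrix of those eigenvalues; in particular the tuple is a fixed point
of the eigenvalue map `G`. -/
theorem stmt_7 {n p : ℕ}
    (P : Matrix (Fin n) (Fin n) ℂ) (hP : IsUnit P)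
    (d : Fin n → ℂ) (hd : Function.Injective d)
    (A : Matrix (Fin n) (Fin n) ℂ) (hA : A = P * Matrix.diagonal d * P⁻¹)
    (b c : Fin n → ℂ)
    (κ : Fin p → Fin n) (hκ : StrictMono κ)
    (hR : ∀ k : Fin n, (c ⬝ᵥ P.mulVec (Pi.single k 1)) * (P⁻¹.mulVec b k) ≠ 0)
    (X Y : Matrix (Fin n) (Fin p) ℂ)
    (hX : ∀ j : Fin p, (fun i => X i j)
      = (c ⬝ᵥ P.mulVec (Pi.single (κ j) 1))⁻¹ • P.mulVec (Pi.single (κ j) 1))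
    (hY : ∀ j : Fin p, (fun i => Y i j)
      = (b ⬝ᵥ P⁻¹ᵀ.mulVec (Pi.single (κ j) 1))⁻¹ • P⁻¹ᵀ.mulVec (Pi.single (κ j) 1)) :
    (Yᵀ * X)⁻¹ * (Yᵀ * A * X) = Matrix.diagonal (fun j => d (κ j)) := by
  have hPdet : IsUnit P.det := (Matrix.isUnit_iff_isUnit_det P).mp hP
  have hinv : P⁻¹ * P = 1 := Matrix.nonsing_inv_mul P hPdet
  set u : Fin p → Fin n → ℂ := fun j => P.mulVec (Pi.single (κ j) 1) with hu
  set v : Fin p → Fin n → ℂ := fun j => P⁻¹ᵀ.mulVec (Pi.single (κ j) 1) with hv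
  set α : Fin p → ℂ := fun j => (b ⬝ᵥ v j)⁻¹ with hα
  set β : Fin p → ℂ := fun j => (c ⬝ᵥ u j)⁻¹ with hβ
  have hue : ∀ j k, u j k = P k (κ j) := by
    intro j k; simp [hu, Matrix.mulVec, dotProduct, Pi.single_apply]
  have hve : ∀ j k, v j k = P⁻¹ (κ j) k := by
    intro j k; simp [hv, Matrix.mulVec, dotProduct, Pi.single_apply,
      Matrix.transpose_apply]
  have horth : ∀ i j : Fin p, (∑ k, v i k * u j k) = if i = j then 1 else 0 := by
    intro i j
    have : (∑ k, v i k * u j k) = (P⁻¹ * P) (κ i) (κ j) := by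
      simp [hue, hve, Matrix.mul_apply]
    rw [this, hinv, Matrix.one_apply]
    by_cases h : i = j
    · simp [h]
    · rw [if_neg (fun hh => h (hκ.injective hh)), if_neg h]
  have hbv : ∀ j : Fin p, b ⬝ᵥ v j = P⁻¹.mulVec b (κ j) := by
    intro j
    simp [dotProduct, hve, Matrix.mulVec, mul_comm]
  have hg : ∀ j : Fin p, α j * β j ≠ 0 := by
    intro j
    have h0 := hR (κ j)
    rw [← hbv j] at h0
    have h1 : (c ⬝ᵥ u j) ≠ 0 := fun h => h0 (mul_eq_zero_of_left h _)
    have h2 : (b ⬝ᵥ v j) ≠ 0 := fun h => h0 (mul_eq_zero_of_right _ h)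
    simp [hα, hβ, h1, h2]
  have hXc : ∀ j i, X i j = β j * u j i := by
    intro j i
    have h := congrFun (hX j) i
    simp only [Pi.smul_apply, smul_eq_mul] at h
    exact h
  have hYc : ∀ j i, Y i j = α j * v j i := by
    intro j i
    have h := congrFun (hY j) i
    simp only [Pi.smul_apply, smul_eq_mul] at h
    exact h
  have hYX : Yᵀ * X = Matrix.diagonal (fun j => α j * β j) := by
    ext i j
    rw [Matrix.mul_apply, Matrix.diagonal_apply]
    have hs : (∑ k, Yᵀ i k * X k j) = α i * β j * ∑ k, v i k * u j k := by
      rw [Finset.mul_sum]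
      refine Finset.sum_congr rfl fun k _ => ?_
      rw [Matrix.transpose_apply, hYc, hXc]; ring
    rw [hs, horth]
    by_cases h : i = j <;> simp [h]
  have hPDP : P * Matrix.diagonal d * P⁻¹ * P = P * Matrix.diagonal d := by
    rw [Matrix.mul_assoc, hinv, Matrix.mul_one]
  have hAu : ∀ j, A.mulVec (u j) = d (κ j) • u j := by
    intro j
    have e1 : u j = P.mulVec (Pi.single (κ j) 1) := rfl
    have h2 : (Matrix.diagonal d).mulVec (Pi.single (κ j) 1)
        = d (κ j) • (Pi.single (κ j) 1 : Fin n → ℂ) := by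
      ext k
      by_cases h : k = κ j <;>
        simp [Matrix.mulVec_single, h, Pi.single_apply]
    have h3 : A.mulVec (u j) = (P * Matrix.diagonal d).mulVec (Pi.single (κ j) 1) := by
      rw [e1, Matrix.mulVec_mulVec, hA, hPDP]
    rw [h3, ← Matrix.mulVec_mulVec, h2, Matrix.mulVec_smul, e1]
  have hAX : A * X = X * Matrix.diagonal (fun j => d (κ j)) := by
    ext i j
    rw [Matrix.mul_apply, Matrix.mul_apply]
    have hl : (∑ k, A i k * X k j) = (A.mulVec (fun k => X k j)) i := by
      simp [Matrix.mulVec, dotProduct]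
    have hcol : (fun k => X k j) = β j • u j := by
      funext k; simp [hXc, Pi.smul_apply, smul_eq_mul]
    rw [hl, hcol, Matrix.mulVec_smul, hAu]
    simp [Matrix.diagonal_apply, Finset.sum_ite_eq, hXc]
    ring
  have key : Yᵀ * A * X = (Yᵀ * X) * Matrix.diagonal (fun j => d (κ j)) := by
    rw [Matrix.mul_assoc, hAX, ← Matrix.mul_assoc]
  have hdet : IsUnit (Yᵀ * X).det := by
    rw [hYX, Matrix.det_diagonal]
    exact isUnit_iff_ne_zero.mpr (Finset.prod_ne_zero_iff.mpr fun j _ => hg j)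
  rw [key, ← Matrix.mul_assoc, Matrix.nonsing_inv_mul _ hdet, Matrix.one_mul]
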